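/- For every natural number n, the word σ^n([white]) is nonempty, its first letter is white and its last letter is white; consequently every occurrence of the letter black in σ^n([white]) is strictly interior and is immediately preceded and immediately followed by a white letter. -/

import Mathlib

/-- Colours: `false` = white, `true` = black. The Fibonacci substitution on letters:
σ(white) = [white, black, white], σ(black) = [black, white]. -/
def fibSubLetter : Bool → List Bool
  | false => [false, true, false]
  | true  => [true, false]

/-- The Fibonacci substitution extended to words by concatenation. -/
def fibSub (w : List Bool) : List Bool := w.flatMap fibSubLetter

lemma fibSub_cons (a : Bool) (t : List Bool) :
    fibSub (a :: t) = fibSubLetter a ++ fibSub t := by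
  simp [fibSub]

lemma fibSub_ne_nil {w : List Bool} (h : w ≠ []) : fibSub w ≠ [] := by
  cases w with
  | nil => exact absurd rfl h
  | cons a t => rw [fibSub_cons]; cases a <;> simp [fibSubLetter]

lemma fibSub_chain (w : List Bool) :
    List.IsChain (fun a b => a = false ∨ b = false) (fibSub w) := by
  induction w with
  | nil => simp [fibSub]
  | cons a t ih =>
    rw [fibSub_cons]
    apply List.IsChain.append
    · cases a <;> simp [fibSubLetter]
    · exact ih
    · intro x hx y _
      cases a <;> simp [fibSubLetter] at hx <;> subst hx <;> exact Or.inl rfl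

lemma fibSub_getLast? {w : List Bool} (h : w ≠ []) :
    (fibSub w).getLast? = some false := by
  induction w with
  | nil => exact absurd rfl h
  | cons a t ih =>
    rw [fibSub_cons]
    cases t with
    | nil => cases a <;> rfl
    | cons b s =>
      rw [List.getLast?_append_of_ne_nil _ (fibSub_ne_nil (by simp))]
      exact ih (by simp)

lemma fibSub_invariant : ∀ n : ℕ,
    fibSub^[n] [false] ≠ [] ∧
    (fibSub^[n] [false]).head? = some false ∧
    (fibSub^[n] [false]).getLast? = some false ∧
    List.IsChain (fun a b => a = false ∨ b = false) (fibSub^[n] [false]) := by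
  intro n
  induction n with
  | zero => refine ⟨by simp, rfl, rfl, by simp⟩
  | succ n ih =>
    obtain ⟨hne, hhd, _, _⟩ := ih
    rw [Function.iterate_succ_apply']
    refine ⟨fibSub_ne_nil hne, ?_, fibSub_getLast? hne, fibSub_chain _⟩
    obtain ⟨t, ht⟩ : ∃ t, fibSub^[n] [false] = false :: t := by
      cases h : fibSub^[n] [false] with
      | nil => exact absurd h hne
      | cons a t =>
        rw [h] at hhd
        simp at hhd
        exact ⟨t, by rw [hhd]⟩
    rw [ht, fibSub_cons]
    rfl

/-- For every `n`, the word `σ^n([white])` is nonempty, starts and ends with white,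
and every occurrence of black is strictly interior, immediately preceded and followed
by a white letter. -/
theorem fibWord_first_last_white_and_blacks_interior (n : ℕ) :
    fibSub^[n] [false] ≠ [] ∧
    (fibSub^[n] [false]).head? = some false ∧
    (fibSub^[n] [false]).getLast? = some false ∧
    ∀ i : ℕ, (fibSub^[n] [false])[i]? = some true →
      0 < i ∧ i + 1 < (fibSub^[n] [false]).length ∧
      (fibSub^[n] [false])[i - 1]? = some false ∧
      (fibSub^[n] [false])[i + 1]? = some false := by
  obtain ⟨hne, hhd, hlast, hchain⟩ := fibSub_invariant n
  set w := fibSub^[n] [false] with hw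
  refine ⟨hne, hhd, hlast, ?_⟩
  intro i hi
  obtain ⟨hilt, hget⟩ := List.getElem?_eq_some_iff.mp hi
  have hchain' := List.isChain_iff_getElem.mp hchain
  have hipos : 0 < i := by
    rcases Nat.eq_zero_or_pos i with h0 | h0
    · subst h0
      rw [List.head?_eq_getElem?, hi] at hhd
      simp at hhd
    · exact h0
  have hlen : i + 1 < w.length := by
    rcases lt_or_eq_of_le (Nat.succ_le_of_lt hilt) with h | h
    · exact h
    · exfalso
      have : w.getLast? = w[i]? := by
        rw [List.getLast?_eq_getElem?, ← h]
        simp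
      rw [hlast, hi] at this
      simp at this
  constructor
  · exact hipos
  constructor
  · exact hlen
  constructor
  · -- predecessor
    have hi1 : i - 1 + 1 < w.length := by omega
    have := hchain' (i - 1) hi1
    have heq : i - 1 + 1 = i := by omega
    rcases this with h | h
    · rw [List.getElem?_eq_getElem (by omega), h]
    · exfalso
      have : w[i - 1 + 1] = true := by
        have := hget
        simp_all [heq]
      rw [this] at h
      simp at h
  · -- successor
    have hi1 : i + 1 < w.length := by omega
    have := hchain' i hi1
    rcases this with h | h
    · exfalso; rw [hget] at h; simp at h
    · rw [List.getElem?_eq_getElem (by omega), h]
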